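/- Let f : ℤ_p × ℤ_p → C be a continuous function satisfying f(x+y,z) − f(y,z) − f(x,y+z) + f(x,y) = 0 and f(x,y) = f(y,x) for all x, y, z ∈ ℤ_p. Then there exists a continuous function g : ℤ_p → C such that f(x,y) = g(x+y) − g(x) − g(y) for all x, y ∈ ℤ_p. -/

import Mathlib

/-- Let `p` be a prime and `C = ℂ_p` the completion of an algebraic
closure of `ℚ_p` (formalized as a complete algebraically closed nonarchimedean normed
field equipped with an isometric embedding of `ℚ_p`).  Every continuous symmetric
2-cocycle `f : ℤ_p × ℤ_p → C` is the coboundary of a continuous `g : ℤ_p → C`. -/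
theorem continuous_symm_two_cocycle_is_coboundary
    {p : ℕ} [Fact p.Prime]
    (C : Type*) [NormedField C] [CompleteSpace C] [IsUltrametricDist C]
    [IsAlgClosed C] [Algebra ℚ_[p] C]
    (hisom : ∀ q : ℚ_[p], ‖algebraMap ℚ_[p] C q‖ = ‖q‖)
    (f : ℤ_[p] × ℤ_[p] → C) (hf : Continuous f)
    (hcocycle : ∀ x y z : ℤ_[p], f (x + y, z) - f (y, z) - f (x, y + z) + f (x, y) = 0)
    (hsymm : ∀ x y : ℤ_[p], f (x, y) = f (y, x)) :
    ∃ g : ℤ_[p] → C, Continuous g ∧ ∀ x y : ℤ_[p], f (x, y) = g (x + y) - g x - g y := by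
  letI : NormedSpace ℚ_[p] C :=
    ⟨fun q x => le_of_eq (by rw [Algebra.smul_def, norm_mul, hisom])⟩
  letI : Module ℤ_[p] C := Module.compHom C (PadicInt.Coe.ringHom (p := p))
  haveI : IsBoundedSMul ℤ_[p] C := IsBoundedSMul.of_norm_smul_le fun r x => le_of_eq (by
    show ‖(r : ℚ_[p]) • x‖ = ‖r‖ * ‖x‖
    rw [norm_smul]
    rfl)
  set c : C := f (0, 0) with hc
  have hf0 : ∀ x z : ℤ_[p], f (x, 0) = f (0, z) := by
    intro x z
    have h := hcocycle x 0 z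
    simp only [add_zero, zero_add] at h
    linear_combination h
  have hf01 : f ((0 : ℤ_[p]), (1 : ℤ_[p])) = c := (hf0 0 1).symm
  -- the continuous map x ↦ f (x, 1) - c
  set u : C(ℤ_[p], C) :=
    ⟨fun x => f (x, 1) - c,
      (hf.comp (continuous_id.prodMk continuous_const)).sub continuous_const⟩ with hu
  set b : ℕ → C := fun n => (fwdDiff (1:ℤ_[p]))^[n] (⇑u) 0 with hb
  have hb_tendsto : Filter.Tendsto b Filter.atTop (nhds 0) :=
    PadicInt.fwdDiff_tendsto_zero u
  have hb0 : b 0 = 0 := by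
    simp only [hb, Function.iterate_zero, id_eq]
    show f ((0 : ℤ_[p]), (1 : ℤ_[p])) - c = 0
    rw [hf01, sub_self]
  -- shifted coefficients
  set a : ℕ → C := fun n => Nat.rec 0 (fun k _ => b k) n with ha
  have ha_succ : ∀ n, a (n + 1) = b n := fun n => rfl
  have ha0 : a 0 = 0 := rfl
  have ha_tendsto : Filter.Tendsto a Filter.atTop (nhds 0) := by
    rw [← Filter.tendsto_add_atTop_iff_nat 1]
    simpa only [ha_succ] using hb_tendsto
  set G : C(ℤ_[p], C) := PadicInt.mahlerSeries a with hG
  -- forward difference of G equals u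
  set DG : C(ℤ_[p], C) :=
    ⟨fun x => G (x + 1) - G x,
      (G.continuous.comp (continuous_id.add continuous_const)).sub G.continuous⟩ with hDG
  have hDG_coe : ⇑DG = fwdDiff (1:ℤ_[p]) ⇑G := rfl
  have hDG_coeff : ∀ n, (fwdDiff (1:ℤ_[p]))^[n] (⇑DG) 0 = b n := by
    intro n
    rw [hDG_coe, ← Function.iterate_succ_apply]
    rw [PadicInt.fwdDiff_mahlerSeries ha_tendsto (n + 1)]
  have hDG_eq_u : DG = u := by
    have h1 := PadicInt.hasSum_mahler (p := p) DG
    have h2 := PadicInt.hasSum_mahler (p := p) u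
    refine HasSum.unique ?_ h2
    convert h1 using 2 with n
    rw [hDG_coeff n]
  have hstar : ∀ x : ℤ_[p], G (x + 1) - G x = f (x, 1) - c := fun x =>
    DFunLike.congr_fun hDG_eq_u x
  -- values of G at 0 and 1
  have hG0 : G (0 : ℤ_[p]) = 0 := by
    have := PadicInt.mahlerSeries_apply_nat (p := p) ha_tendsto (le_refl 0)
    simpa [ha0] using this
  have hG1 : G (1 : ℤ_[p]) = 0 := by
    have := PadicInt.mahlerSeries_apply_nat (p := p) ha_tendsto (le_refl 1)
    simp only [Nat.cast_one] at this
    rw [this]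
    simp only [Finset.sum_range_succ, Finset.sum_range_zero, ha0, smul_zero, zero_add, add_zero]
    show Nat.choose 1 1 • a 1 = 0
    rw [show a 1 = b 0 from rfl, hb0, smul_zero]
  -- rearranged star
  have hstar' : ∀ x : ℤ_[p], f (x, 1) = c + G (x + 1) - G x := by
    intro x
    linear_combination -hstar x
  -- key claim: f(x,y) = c + G(x+y) - G x - G y
  have key : ∀ x y : ℤ_[p], f (x, y) = c + G (x + y) - G x - G y := by
    intro x
    have hnat : ∀ n : ℕ, f (x, (n : ℤ_[p])) = c + G (x + n) - G x - G n := by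
      intro n
      induction n with
      | zero =>
        have h0 : f (x, (0 : ℤ_[p])) = c := by rw [hf0 x 0, ← hc]
        simp only [Nat.cast_zero, add_zero]
        rw [hG0, h0]
        ring
      | succ n ih =>
        have hcoc := hcocycle x (n : ℤ_[p]) 1
        have e1 := hstar' (x + n)
        have e2 := hstar' (n : ℤ_[p])
        push_cast
        rw [show x + ((n : ℤ_[p]) + 1) = (x + n) + 1 by ring]
        rw [show f (x, (n : ℤ_[p]) + 1) =
            f (x + n, 1) - f ((n : ℤ_[p]), 1) + f (x, (n : ℤ_[p])) by
          linear_combination -hcoc]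
        rw [e1, e2, ih]
        ring
    have hcont1 : Continuous fun y : ℤ_[p] => f (x, y) :=
      hf.comp (continuous_const.prodMk continuous_id)
    have hcont2 : Continuous fun y : ℤ_[p] => c + G (x + y) - G x - G y := by
      refine ((continuous_const.add (G.continuous.comp
        (continuous_const.add continuous_id))).sub continuous_const).sub G.continuous
    intro y
    have := Continuous.ext_on PadicInt.denseRange_natCast hcont1 hcont2 ?_
    · exact congrFun this y
    · rintro _ ⟨n, rfl⟩
      exact hnat n
  refine ⟨fun x => G x - c, G.continuous.sub continuous_const, fun x y => ?_⟩
  rw [key x y]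
  ring
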